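/- arXiv:1003.0775 — 4 statements merged into one kernel-verified Lean document; each statement's English description precedes it below -/
import Mathlib

section
/- Suppose b = 1 (so m₀ = 3a + 1). Then in R = K[X₀,X₁,X₂,X₃] the following two polynomial identities hold: (i) ψ(1,0)φ(2,2) + ψ(1,2)φ(1,1) − ψ(1,1)φ(1,2) = 0; (ii) ψ(1,1)² − ψ(1,2)ψ(1,0) − X₃^{a−1}ψ(1,2)φ(2,2) + X₀^{a+d−1}ψ(1,0)φ(1,1) − X₃^{a−1}X₀^{a+d−1}(φ(1,2)² − φ(2,2)φ(1,1)) = 0. -/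
noncomputable section

open MvPolynomial

abbrev Vb (b : ℕ) : Type := Fin 4 ⊕ Fin (4 - b) ⊕ Fin 3

abbrev Rb (K : Type) [Field K] (b : ℕ) : Type := MvPolynomial (Vb b) K

abbrev R4 (K : Type) [Field K] : Type := MvPolynomial (Fin 4) K

def eps (i j : ℤ) : ℤ := if i + j < 3 then i + j else 3

variable (K : Type) [Field K] (a d b : ℕ)

/-- The variable `X_i` of `R_b`, with the convention `X_i = 0` for `i ∉ {0,1,2,3}`. -/
def Xv (i : ℤ) : Rb K b :=
  if h : 0 ≤ i ∧ i < 4 then X (Sum.inl ⟨i.toNat, by omega⟩) else 0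

/-- The variable `Ψ(b,j)` of `R_b`, with the convention `Ψ(b,j) = 0` for `j ∉ {0,…,3-b}`. -/
def Psi (j : ℤ) : Rb K b :=
  if h : 0 ≤ j ∧ j < 4 - (b : ℤ) then X (Sum.inr (Sum.inl ⟨j.toNat, by omega⟩)) else 0

/-- The variable `Φ(i,j)` of `R_b`, with `Φ(i,j) = Φ(j,i)` and `Φ(i,j) = 0` unless `i,j ∈ {1,2}`. -/
def Phi (i j : ℤ) : Rb K b :=
  if i = 1 ∧ j = 1 then X (Sum.inr (Sum.inr 2))
  else if (i = 1 ∧ j = 2) ∨ (i = 2 ∧ j = 1) then X (Sum.inr (Sum.inr 1))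
  else if i = 2 ∧ j = 2 then X (Sum.inr (Sum.inr 0))
  else 0

/-- `L(i) = X_iΦ(2,2) − X_{i+1}Φ(1,2) + X_{i+2}Φ(1,1)` for `i ∈ {0,1}`, `0` otherwise. -/
def Lp (i : ℤ) : Rb K b :=
  if i = 0 ∨ i = 1 then
    Xv K b i * Phi K b 2 2 - Xv K b (i + 1) * Phi K b 1 2 + Xv K b (i + 2) * Phi K b 1 1
  else 0

/-- `D = (X₁² − X₂X₀)Φ(1,2) − (X₁X₂ − X₃X₀)Φ(1,1)`. -/
def Dp : Rb K b :=
  (Xv K b 1 ^ 2 - Xv K b 2 * Xv K b 0) * Phi K b 1 2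
    - (Xv K b 1 * Xv K b 2 - Xv K b 3 * Xv K b 0) * Phi K b 1 1

/-- `B(i,j)`. -/
def Bp (i j : ℤ) : Rb K b :=
  (Xv K b i * Xv K b j - Xv K b (eps i j) * Xv K b (i + j - eps i j)) * Psi K b (3 - (b : ℤ))
    - (Xv K b 3 ^ a * Xv K b (b : ℤ) - Xv K b 0 ^ (a + d + 1)) * Phi K b i j

/-- `A(i;b,j)`. -/
def Ap (i j : ℤ) : Rb K b :=
  Xv K b i * Psi K b j
    - Xv K b ((b : ℤ) + i + j - eps i ((b : ℤ) + j)) * Psi K b (eps i ((b : ℤ) + j) - (b : ℤ))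
    - Xv K b 3 ^ a * Phi K b i ((b : ℤ) + j)
    + Xv K b 0 ^ (a + d) * (Phi K b i j - Phi K b ((b : ℤ) + i + j - 3) (3 - (b : ℤ)))

/-- `Q(b,i)`. -/
def Qp (i : ℕ) : Rb K b :=
  if b = 1 ∧ i = 1 then
    Psi K b 0 * Phi K b 2 2 + Psi K b 2 * Phi K b 1 1 - Psi K b 1 * Phi K b 1 2
  else if b = 1 ∧ i = 2 then
    Psi K b 1 ^ 2 - Psi K b 2 * Psi K b 0 - Xv K b 3 ^ (a - 1) * Psi K b 2 * Phi K b 2 2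
      + Xv K b 0 ^ (a + d - 1) * Psi K b 0 * Phi K b 1 1
      - Xv K b 3 ^ (a - 1) * Xv K b 0 ^ (a + d - 1) *
          (Phi K b 1 2 ^ 2 - Phi K b 2 2 * Phi K b 1 1)
  else if b = 2 ∧ i = 1 then
    Psi K b 0 ^ 2 * Phi K b 2 2 - Xv K b 3 ^ (a - 1) * Psi K b 1 * Phi K b 2 2 ^ 2
      - Psi K b 1 * Psi K b 0 * Phi K b 1 2
      - Xv K b 3 ^ (a - 1) * Xv K b 0 ^ (a + d - 1) * Phi K b 1 2 ^ 3
      + Psi K b 1 ^ 2 * Phi K b 1 1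
      + Xv K b 3 ^ (a - 1) * Xv K b 0 ^ (a + d - 1) * Phi K b 2 2 * Phi K b 1 2 * Phi K b 1 1
      + Xv K b 0 ^ (a + d - 1) * Psi K b 0 * Phi K b 1 1 ^ 2
  else 0

/-- `P(i,j) = tX_iX_j − tX_{ε(i,j)}X_{i+j−ε(i,j)} − Φ(i,j)` in `S = R_b[t]`. -/
def Pp (i j : ℤ) : Polynomial (Rb K b) :=
  Polynomial.X * Polynomial.C (Xv K b i * Xv K b j)
    - Polynomial.X * Polynomial.C (Xv K b (eps i j) * Xv K b (i + j - eps i j))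
    - Polynomial.C (Phi K b i j)

/-- `P(Ψ(b,l)) = tX_{b+l}X₃^a − tX_lX₀^{a+d} − Ψ(b,l)` in `S = R_b[t]`. -/
def PPsi (l : ℤ) : Polynomial (Rb K b) :=
  Polynomial.X * Polynomial.C (Xv K b ((b : ℤ) + l) * Xv K b 3 ^ a)
    - Polynomial.X * Polynomial.C (Xv K b l * Xv K b 0 ^ (a + d))
    - Polynomial.C (Psi K b l)

/-- The variable `X_i` of `R = K[X₀,X₁,X₂,X₃]`, with `X_i = 0` for `i ∉ {0,1,2,3}`. -/
def XR (i : ℤ) : R4 K :=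
  if h : 0 ≤ i ∧ i < 4 then X ⟨i.toNat, by omega⟩ else 0

/-- `φ(i,j) = X_iX_j − X_{ε(i,j)}X_{i+j−ε(i,j)}` for `i,j ∈ {1,2}`, `0` otherwise. -/
def phiR (i j : ℤ) : R4 K :=
  if (i = 1 ∨ i = 2) ∧ (j = 1 ∨ j = 2) then
    XR K i * XR K j - XR K (eps i j) * XR K (i + j - eps i j)
  else 0

/-- `ψ(b,j) = X_{b+j}X₃^a − X_jX₀^{a+d}` for `j ∈ {0,…,3-b}`, `0` otherwise. -/
def psiR (j : ℤ) : R4 K :=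
  if 0 ≤ j ∧ j ≤ 3 - (b : ℤ) then
    XR K ((b : ℤ) + j) * XR K 3 ^ a - XR K j * XR K 0 ^ (a + d)
  else 0

/-- `φ_b : R_b → R[t]`, `X_i ↦ X_i`, `Φ(i,j) ↦ φ(i,j)·t`, `Ψ(b,j) ↦ ψ(b,j)·t`. -/
def phib : Rb K b →ₐ[K] Polynomial (R4 K) :=
  aeval fun v =>
    match v with
    | Sum.inl i => Polynomial.C (X i)
    | Sum.inr (Sum.inl j) => Polynomial.C (psiR K a d b (j : ℤ)) * Polynomial.X
    | Sum.inr (Sum.inr k) =>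
        Polynomial.C (if k = 0 then phiR K 2 2 else if k = 1 then phiR K 1 2
          else phiR K 1 1) * Polynomial.X

/-- `η : R → K[T]`, `X_i ↦ T^{m_i}`. -/
def eta (m : Fin 4 → ℕ) : R4 K →ₐ[K] Polynomial K :=
  aeval fun i => Polynomial.X ^ (m i)


/-- Suppose `b = 1` (so `m₀ = 3a + 1`).  Then in `R = K[X₀,X₁,X₂,X₃]`:
(i) `ψ(1,0)φ(2,2) + ψ(1,2)φ(1,1) − ψ(1,1)φ(1,2) = 0`;
(ii) `ψ(1,1)² − ψ(1,2)ψ(1,0) − X₃^{a−1}ψ(1,2)φ(2,2) + X₀^{a+d−1}ψ(1,0)φ(1,1)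
      − X₃^{a−1}X₀^{a+d−1}(φ(1,2)² − φ(2,2)φ(1,1)) = 0`. -/
theorem Q_identities_b_one (K : Type) [Field K] (a d : ℕ) (ha : 1 ≤ a) (hd : 1 ≤ d) :
    psiR K a d 1 0 * phiR K 2 2 + psiR K a d 1 2 * phiR K 1 1
        - psiR K a d 1 1 * phiR K 1 2 = 0 ∧
    psiR K a d 1 1 ^ 2 - psiR K a d 1 2 * psiR K a d 1 0
        - XR K 3 ^ (a - 1) * psiR K a d 1 2 * phiR K 2 2
        + XR K 0 ^ (a + d - 1) * psiR K a d 1 0 * phiR K 1 1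
        - XR K 3 ^ (a - 1) * XR K 0 ^ (a + d - 1) *
            (phiR K 1 2 ^ 2 - phiR K 2 2 * phiR K 1 1) = 0 := by
  obtain ⟨a, rfl⟩ : ∃ a', a = a' + 1 := ⟨a - 1, by omega⟩
  have h1 : a + 1 - 1 = a := rfl
  have h2 : a + 1 + d - 1 = a + d := by omega
  simp only [psiR, phiR, XR, eps, h1, h2]
  norm_num
  constructor <;> ring
end
end

section
/- Suppose b = 2 (so m₀ = 3a + 2). Then in R = K[X₀,X₁,X₂,X₃] the following polynomial identity holds: ψ(2,0)²φ(2,2) − X₃^{a−1}ψ(2,1)φ(2,2)² − ψ(2,1)ψ(2,0)φ(1,2) − X₃^{a−1}X₀^{a+d−1}φ(1,2)³ + ψ(2,1)²φ(1,1) + X₃^{a−1}X₀^{a+d−1}φ(2,2)φ(1,2)φ(1,1) + X₀^{a+d−1}ψ(2,0)φ(1,1)² = 0. -/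
noncomputable section

open MvPolynomial

variable (K : Type) [Field K] (a d b : ℕ)

/-- Suppose `b = 2` (so `m₀ = 3a + 2`).  Then in `R = K[X₀,X₁,X₂,X₃]`:
`ψ(2,0)²φ(2,2) − X₃^{a−1}ψ(2,1)φ(2,2)² − ψ(2,1)ψ(2,0)φ(1,2) − X₃^{a−1}X₀^{a+d−1}φ(1,2)³
 + ψ(2,1)²φ(1,1) + X₃^{a−1}X₀^{a+d−1}φ(2,2)φ(1,2)φ(1,1) + X₀^{a+d−1}ψ(2,0)φ(1,1)² = 0`. -/
theorem Q_identity_b_two (K : Type) [Field K] (a d : ℕ) (ha : 1 ≤ a) (hd : 1 ≤ d) :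
    psiR K a d 2 0 ^ 2 * phiR K 2 2
        - XR K 3 ^ (a - 1) * psiR K a d 2 1 * phiR K 2 2 ^ 2
        - psiR K a d 2 1 * psiR K a d 2 0 * phiR K 1 2
        - XR K 3 ^ (a - 1) * XR K 0 ^ (a + d - 1) * phiR K 1 2 ^ 3
        + psiR K a d 2 1 ^ 2 * phiR K 1 1
        + XR K 3 ^ (a - 1) * XR K 0 ^ (a + d - 1) * phiR K 2 2 * phiR K 1 2 * phiR K 1 1
        + XR K 0 ^ (a + d - 1) * psiR K a d 2 0 * phiR K 1 1 ^ 2 = 0 := by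
  obtain ⟨a, rfl⟩ : ∃ a', a = a' + 1 := ⟨a - 1, by omega⟩
  have h1 : a + 1 - 1 = a := rfl
  have h2 : a + 1 + d = (a + d) + 1 := by ring
  have h3 : a + 1 + d - 1 = a + d := by omega
  simp only [psiR, phiR, XR, eps, h1, h2, h3]
  norm_num
  ring
end
end

section
/- Let b ∈ {1,2,3}, i ∈ {1,2,3} and j ∈ {0,…,2−b} with b ≠ 3. Then in R = K[X₀,X₁,X₂,X₃] the following identity holds: X_i·ψ(b,j) − X_{b+i+j−ε(i,b+j)}·ψ(b,ε(i,b+j)−b) − X₃^a·φ(i,b+j) + X₀^{a+d}·(φ(i,j) − φ(b+i+j−3,3−b)) = 0, where by convention X_k := 0 for k ∉ {0,1,2,3}, φ(i,j) := φ(j,i), φ(i,j) := 0 unless i,j ∈ {1,2}, and ψ(b,j) := 0 unless j ∈ {0,…,3−b}. -/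
noncomputable section

open MvPolynomial

variable (K : Type) [Field K] (a d b : ℕ)

/-- Let `b ∈ {1,2,3}` with `b ≠ 3`, `i ∈ {1,2,3}` and `j ∈ {0,…,2−b}`.
Then in `R = K[X₀,X₁,X₂,X₃]`:
`X_iψ(b,j) − X_{b+i+j−ε(i,b+j)}ψ(b,ε(i,b+j)−b) − X₃^aφ(i,b+j)
  + X₀^{a+d}(φ(i,j) − φ(b+i+j−3,3−b)) = 0`,
with the conventions `X_k = 0` for `k ∉ {0,1,2,3}`, `φ(i,j) = φ(j,i)`, `φ(i,j) = 0` unless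
`i,j ∈ {1,2}`, and `ψ(b,j) = 0` unless `j ∈ {0,…,3−b}`. -/
theorem A_identity (K : Type) [Field K] (a d b : ℕ)
    (hb : b ∈ ({1, 2, 3} : Set ℕ)) (hb3 : b ≠ 3) (ha : 1 ≤ a) (hd : 1 ≤ d) :
    ∀ i ∈ ({1, 2, 3} : Set ℤ), ∀ j : ℕ, j ≤ 2 - b →
      XR K i * psiR K a d b (j : ℤ)
          - XR K ((b : ℤ) + i + j - eps i ((b : ℤ) + j)) *
              psiR K a d b (eps i ((b : ℤ) + j) - (b : ℤ))
          - XR K 3 ^ a * phiR K i ((b : ℤ) + j)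
          + XR K 0 ^ (a + d) *
              (phiR K i (j : ℤ) - phiR K ((b : ℤ) + i + j - 3) (3 - (b : ℤ))) = 0 := by
  have hb12 : b = 1 ∨ b = 2 := by
    rcases hb with h | h | h <;> simp_all
  rintro i (rfl | rfl | rfl) j hj <;> rcases hb12 with rfl | rfl <;>
    interval_cases j <;>
    simp only [XR, psiR, phiR, eps, Nat.cast_one, Nat.cast_two, Nat.cast_ofNat,
      Nat.cast_zero] <;>
    norm_num <;> ring
end
end

section
/- Suppose b = 3. Then every partial derivative of each of the five generators L(0), L(1), B(1,1), B(1,2), B(2,2) of E₃ with respect to each of the 8 variables of R₃ lies in the prime ideal 𝔓₃ = (X₁,X₂,X₃,X₀,Φ(2,2),Φ(1,2),Φ(1,1)); equivalently, the Jacobian matrix of these generators taken modulo 𝔓₃ is the zero matrix. -/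
noncomputable section

open MvPolynomial

variable (K : Type) [Field K] (a d b : ℕ)

/-- The prime ideal `𝔓₃ = (X₁,X₂,X₃,X₀,Φ(2,2),Φ(1,2),Φ(1,1))` of `R₃`, generated by all
variables except `Ψ(3,0)`. -/
def Pfrak3 : Ideal (Rb K 3) :=
  Ideal.span (MvPolynomial.X '' {v : Vb 3 | v ≠ Sum.inr (Sum.inl 0)})

/-- For `b = 3`, every partial derivative of each of the five generators
`L(0), L(1), B(1,1), B(1,2), B(2,2)` of `E₃` with respect to each variable of `R₃` lies in
`𝔓₃`; i.e. the Jacobian matrix of these generators modulo `𝔓₃` is zero. -/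
theorem jacobian_b_three (K : Type) [Field K] (a d : ℕ) (ha : 1 ≤ a) (hd : 1 ≤ d)
    (hgcd : Nat.gcd (3 * a + 3) d = 1)
    (hmin : ∀ i : Fin 4, (3 * a + 3 + (i : ℕ) * d) ∉
      AddSubmonoid.closure {x : ℕ | ∃ j : Fin 4, j ≠ i ∧ x = 3 * a + 3 + (j : ℕ) * d}) :
    ∀ g ∈ ({Lp K 3 0, Lp K 3 1, Bp K a d 3 1 1, Bp K a d 3 1 2, Bp K a d 3 2 2} :
        Set (Rb K 3)),
      ∀ v : Vb 3, MvPolynomial.pderiv v g ∈ Pfrak3 K := by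
  intro g hg v
  have hP : ∀ w : Vb 3, w ≠ Sum.inr (Sum.inl 0) → (MvPolynomial.X w : Rb K 3) ∈ Pfrak3 K :=
    fun w hw => Ideal.subset_span ⟨w, hw, rfl⟩
  have hsq : g ∈ Pfrak3 K * Pfrak3 K := by
    simp only [Lp, Bp, Xv, Phi, Psi, eps] at hg
    norm_num at hg
    rcases hg with rfl | rfl | rfl | rfl | rfl
    · exact add_mem (sub_mem
        (Ideal.mul_mem_mul (hP _ (by simp)) (hP _ (by simp)))
        (Ideal.mul_mem_mul (hP _ (by simp)) (hP _ (by simp))))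
        (Ideal.mul_mem_mul (hP _ (by simp)) (hP _ (by simp)))
    · exact add_mem (sub_mem
        (Ideal.mul_mem_mul (hP _ (by simp)) (hP _ (by simp)))
        (Ideal.mul_mem_mul (hP _ (by simp)) (hP _ (by simp))))
        (Ideal.mul_mem_mul (hP _ (by simp)) (hP _ (by simp)))
    all_goals {
      rw [pow_succ]
      refine sub_mem (Ideal.mul_mem_right _ _ (sub_mem
          (Ideal.mul_mem_mul (hP _ (by simp)) (hP _ (by simp)))
          (Ideal.mul_mem_mul (hP _ (by simp)) (hP _ (by simp)))))
        (Ideal.mul_mem_right _ _ (sub_mem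
          (Ideal.mul_mem_mul (Ideal.pow_mem_of_mem _ (hP _ (by simp)) a (by omega))
            (hP _ (by simp)))
          (Ideal.mul_mem_mul (Ideal.pow_mem_of_mem _ (hP _ (by simp)) (a + d) (by omega))
            (hP _ (by simp))))) }
  refine Submodule.mul_induction_on hsq (fun m hm n hn => ?_) (fun x y hx hy => ?_)
  · rw [pderiv_mul]
    exact add_mem (Ideal.mul_mem_left _ _ hn) (Ideal.mul_mem_right _ _ hm)
  · rw [map_add]; exact add_mem hx hy
end
end
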